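/- arXiv:1711.08729 — 2 statements merged into one kernel-verified Lean document; each statement's English description precedes it below -/
import Mathlib

section
/- Let n ≥ 1, let g ∈ F_q[t] be monic with deg g ≤ n − ⌊n/2⌋, and set s = n − ⌊n/2⌋ − deg g ≥ 0. Then the set S*_{s,g} = { t^{⌊n/2⌋} g b₁ + b₂ : b₁ ∈ F_q[t] monic with deg b₁ = s, b₂ ∈ F_q[t] with deg b₂ < deg g and gcd(b₂, g) = 1 } consists of monic polynomials of degree n coprime to g, and every monic polynomial of degree n that is coprime to g is R_{s,g}-equivalent to exactly one element of S*_{s,g}. -/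
/-!
Common setup: `F_q((1/t))` is realized as `LaurentSeries Fq` (formal Laurent series in `X`)
under the identification `X = 1/t`; thus the coefficient of `t^i` is the coefficient of
`X^(-i)`, and `𝕋` consists of series supported on positive powers of `X`.
-/

open Polynomial
open scoped Classical

/-- The element `t` of `F_q((1/t))`, i.e. the Laurent series `X⁻¹`. -/
noncomputable def tElem (Fq : Type) [Field Fq] : LaurentSeries Fq :=
  HahnSeries.single (-1 : ℤ) 1

/-- The natural embedding of `F_q[t]` into `F_q((1/t))`: evaluate the polynomial at `t`. -/
noncomputable def toL {Fq : Type} [Field Fq] (f : Polynomial Fq) : LaurentSeries Fq :=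
  Polynomial.aeval (tElem Fq) f

/-- The norm on `F_q((1/t))`: `|x| = q^j` where `j` is the largest index with `x_j ≠ 0`
(in `t`-coefficients, so `j = -(order of the Hahn series)`), and `|0| = 0`. -/
noncomputable def nrm {Fq : Type} [Field Fq] [Fintype Fq] (x : LaurentSeries Fq) : ℝ :=
  if x = 0 then 0 else (Fintype.card Fq : ℝ) ^ (-(HahnSeries.order x))

/-- `𝕋 = {∑_{i<0} x_i t^i}`: Laurent series supported on negative powers of `t`. -/
def TT (Fq : Type) [Field Fq] : Set (LaurentSeries Fq) :=
  {x | ∀ n : ℤ, n ≤ 0 → x.coeff n = 0}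

/-- The exponential `e_q(x) = ψ(x_{-1})`, where `ψ(y) = e^{2πi·tr(y)/p}` with
`tr : F_q → F_p` the field trace, and `x_{-1}` is the coefficient of `t^{-1}` in `x`
(the coefficient of `X^1` of the Hahn series). -/
noncomputable def eQ {Fq : Type} [Field Fq] [Fintype Fq] (p : ℕ) [CharP Fq p]
    (x : LaurentSeries Fq) : ℂ :=
  letI := ZMod.algebra Fq p
  Complex.exp (2 * Real.pi * Complex.I *
    (((Algebra.trace (ZMod p) Fq (x.coeff 1)).val : ℂ) / (p : ℂ)))

/-- The Möbius function on `F_q[t]`: `μ(f) = (-1)^r` if `f` is a product of `r` distinct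
irreducibles, and `μ(f) = 0` otherwise. -/
noncomputable def mu {Fq : Type} [Field Fq] (f : Polynomial Fq) : ℤ :=
  if Squarefree f then
    (-1) ^ Multiset.card (UniqueFactorizationMonoid.normalizedFactors f)
  else 0

/-- The monic polynomial `X^n + ∑_{i<n} c_i X^i`; monic polynomials of degree `n`
are exactly the `stdPoly n c` for a unique `c : Fin n → Fq`. -/
noncomputable def stdPoly {Fq : Type} [Field Fq] (n : ℕ) (c : Fin n → Fq) : Polynomial Fq :=
  X ^ n + ∑ i : Fin n, C (c i) * X ^ (i : ℕ)

/-- The polynomial `∑_{i<k} c_i X^i` of degree `< k`. -/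
noncomputable def ltPoly {Fq : Type} [Field Fq] (k : ℕ) (c : Fin k → Fq) : Polynomial Fq :=
  ∑ i : Fin k, C (c i) * X ^ (i : ℕ)

/-- Hayes' relation `R_{s,g}` on monic polynomials:
`a ≡ b mod R_{s,g}` iff `g ∣ a - b` and `|a/t^{deg a} - b/t^{deg b}| < q^{-s}`.
(Here `1/t^{deg a}` is the Laurent series `X^{deg a}`.) -/
def Requiv {Fq : Type} [Field Fq] [Fintype Fq] (s : ℕ) (g a b : Polynomial Fq) : Prop :=
  g ∣ (a - b) ∧
  nrm (toL a * HahnSeries.single (a.natDegree : ℤ) 1 -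
        toL b * HahnSeries.single (b.natDegree : ℤ) 1)
    < (Fintype.card Fq : ℝ) ^ (-(s : ℤ))

/-- `φ(g)`: the number of invertible residue classes modulo `g`. -/
noncomputable def phi {Fq : Type} [Field Fq] (g : Polynomial Fq) : ℕ :=
  Nat.card ((Polynomial Fq ⧸ Ideal.span {g})ˣ)

/-- `χ` is (the extension by zero of) a character of the unit group `R*_{s,g}` of the quotient
monoid of monic polynomials modulo `R_{s,g}`: it vanishes off monic polynomials, it is
multiplicative on monic polynomials, it is constant on `R_{s,g}`-classes, and it vanishes at a
monic polynomial exactly when that polynomial is not coprime to `g`.  (Such functions correspond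
bijectively to the characters of the finite abelian group `R*_{s,g}`.) -/
def IsRChar {Fq : Type} [Field Fq] [Fintype Fq] (s : ℕ) (g : Polynomial Fq)
    (χ : Polynomial Fq → ℂ) : Prop :=
  (∀ f : Polynomial Fq, ¬ f.Monic → χ f = 0) ∧
  (∀ a b : Polynomial Fq, a.Monic → b.Monic → χ (a * b) = χ a * χ b) ∧
  (∀ a b : Polynomial Fq, a.Monic → b.Monic → Requiv s g a b → χ a = χ b) ∧
  (∀ f : Polynomial Fq, f.Monic → (χ f = 0 ↔ ¬ IsCoprime f g))

section AuxLemmas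

open Polynomial

variable {Fq : Type} [Field Fq] [Fintype Fq]

set_option linter.unusedSectionVars false in
lemma toL_coeff (f : Polynomial Fq) (j : ℤ) :
    (toL f).coeff j = if j ≤ 0 then f.coeff (-j).toNat else 0 := by
  induction f using Polynomial.induction_on' with
  | add p q hp hq =>
      simp only [toL, map_add, HahnSeries.coeff_add] at *
      rw [hp, hq, Polynomial.coeff_add]
      split <;> simp
  | monomial i c =>
      rw [toL, Polynomial.aeval_monomial]
      have h1 : tElem Fq ^ i = HahnSeries.single (-(i : ℤ)) (1 : Fq) := by
        rw [tElem, HahnSeries.single_pow]; simp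
      have h2 : (algebraMap Fq (LaurentSeries Fq)) c = HahnSeries.single (0 : ℤ) c := by
        rw [HahnSeries.algebraMap_apply', PowerSeries.algebraMap_apply,
          HahnSeries.ofPowerSeries_C, HahnSeries.C_apply]
        simp
      rw [h1, h2, HahnSeries.single_mul_single, zero_add, mul_one, HahnSeries.coeff_single,
        Polynomial.coeff_monomial]
      split_ifs with h3 h4 h5 <;> try rfl
      · omega
      · omega
      · omega

set_option linter.unusedSectionVars false in
lemma D_coeff (a b : Polynomial Fq) (n : ℕ) (j : ℤ) :
    (toL a * HahnSeries.single (n : ℤ) 1 - toL b * HahnSeries.single (n : ℤ) 1).coeff j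
      = if j ≤ (n : ℤ) then (a - b).coeff ((n : ℤ) - j).toNat else 0 := by
  have key : ∀ c : Polynomial Fq,
      (toL c * HahnSeries.single (n : ℤ) 1).coeff j
        = if j ≤ (n : ℤ) then c.coeff ((n : ℤ) - j).toNat else 0 := by
    intro c
    have h0 : (toL c * HahnSeries.single (n : ℤ) 1).coeff ((j - n) + n)
        = (toL c).coeff (j - n) * 1 := HahnSeries.coeff_mul_single_add
    rw [sub_add_cancel, mul_one] at h0
    rw [h0, toL_coeff]
    have h1 : (-(j - (n : ℤ))).toNat = ((n : ℤ) - j).toNat := by omega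
    rw [h1]
    split_ifs with h2 h3 h4 <;> try rfl
    · omega
    · omega
  rw [HahnSeries.coeff_sub, key a, key b, Polynomial.coeff_sub]
  split <;> simp

lemma nrm_lt_iff (a b : Polynomial Fq) (n s : ℕ) (hsn : s ≤ n)
    (ha : a.natDegree ≤ n) (hb : b.natDegree ≤ n) :
    nrm (toL a * HahnSeries.single (n : ℤ) 1 - toL b * HahnSeries.single (n : ℤ) 1)
      < (Fintype.card Fq : ℝ) ^ (-(s : ℤ)) ↔ (a - b).degree < ((n - s : ℕ) : WithBot ℕ) := by
  set D := toL a * HahnSeries.single (n : ℤ) 1 - toL b * HahnSeries.single (n : ℤ) 1 with hDdef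
  have hD : ∀ j : ℤ, D.coeff j = if j ≤ (n : ℤ) then (a - b).coeff ((n : ℤ) - j).toNat else 0 :=
    fun j => D_coeff a b n j
  have hq1 : (1 : ℝ) < (Fintype.card Fq : ℝ) := by exact_mod_cast Fintype.one_lt_card
  have hdegab : (a - b).natDegree ≤ n :=
    le_trans (Polynomial.natDegree_sub_le a b) (max_le ha hb)
  rw [Polynomial.degree_lt_iff_coeff_zero]
  constructor
  · intro h m hm
    by_cases hmn : n < m
    · exact Polynomial.coeff_eq_zero_of_natDegree_lt (lt_of_le_of_lt hdegab hmn)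
    · push_neg at hmn
      have hcoeff : (a - b).coeff m = D.coeff ((n : ℤ) - m) := by
        rw [hD, if_pos (by omega)]
        congr 1
        omega
      rw [hcoeff]
      by_cases hD0 : D = 0
      · simp [hD0]
      · rw [nrm, if_neg hD0] at h
        have hord : (s : ℤ) < D.order := by
          have := (zpow_lt_zpow_iff_right₀ hq1).mp h
          omega
        exact HahnSeries.coeff_eq_zero_of_lt_order (by omega)
  · intro h
    rw [nrm]
    split_ifs with hD0
    · have : (0:ℝ) < (Fintype.card Fq : ℝ) := lt_trans one_pos hq1
      positivity
    · rw [zpow_lt_zpow_iff_right₀ hq1]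
      have hord : (s : ℤ) < D.order := by
        by_contra hc
        push_neg at hc
        have h1 := mt HahnSeries.coeff_order_eq_zero.mp hD0
        rw [hD, if_pos (by omega)] at h1
        exact h1 (h _ (by omega))
      omega

end AuxLemmas

/-- The set `S*_{s,g} = {t^{⌊n/2⌋} g b₁ + b₂ : b₁ monic of degree s,
deg b₂ < deg g, (b₂, g) = 1}` (with `s = n - ⌊n/2⌋ - deg g`) consists of monic polynomials of
degree `n` coprime to `g`, and every monic polynomial of degree `n` coprime to `g` is
`R_{s,g}`-equivalent to exactly one element of it. -/

theorem reduced_representatives_complete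
    (Fq : Type) [Field Fq] [Fintype Fq] (n : ℕ) (hn : 1 ≤ n)
    (g : Polynomial Fq) (hg : g.Monic) (hdeg : g.natDegree ≤ n - n / 2)
    (s : ℕ) (hs : s = n - n / 2 - g.natDegree)
    (S : Set (Polynomial Fq))
    (hS : S = {f : Polynomial Fq | ∃ b₁ b₂ : Polynomial Fq,
      b₁.Monic ∧ b₁.natDegree = s ∧ b₂.degree < g.degree ∧ IsCoprime b₂ g ∧
      f = X ^ (n / 2) * g * b₁ + b₂}) :
    (∀ f ∈ S, f.Monic ∧ f.natDegree = n ∧ IsCoprime f g) ∧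
    (∀ f : Polynomial Fq, f.Monic → f.natDegree = n → IsCoprime f g →
      ∃! b : Polynomial Fq, b ∈ S ∧ Requiv s g f b) := by
  
  have hm2 : n / 2 ≤ n := Nat.div_le_self n 2
  have hsn : s ≤ n := by omega
  have part1 : ∀ f ∈ S, f.Monic ∧ f.natDegree = n ∧ IsCoprime f g := by
    intro f hf
    rw [hS] at hf
    obtain ⟨b₁, b₂, hb₁m, hb₁d, hb₂d, hb₂c, rfl⟩ := hf
    have hPm : (X ^ (n / 2) * g * b₁).Monic := ((monic_X_pow _).mul hg).mul hb₁m
    have hPd : (X ^ (n / 2) * g * b₁).natDegree = n := by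
      rw [Polynomial.natDegree_mul ((monic_X_pow (R := Fq) _).mul hg).ne_zero hb₁m.ne_zero,
        Polynomial.natDegree_mul (monic_X_pow (R := Fq) _).ne_zero hg.ne_zero,
        Polynomial.natDegree_X_pow, hb₁d]
      omega
    have hPdeg : (X ^ (n / 2) * g * b₁).degree = (n : WithBot ℕ) := by
      rw [Polynomial.degree_eq_natDegree hPm.ne_zero, hPd]
    have hblt : b₂.degree < (X ^ (n / 2) * g * b₁).degree := by
      rw [hPdeg]
      refine lt_of_lt_of_le hb₂d ?_
      rw [Polynomial.degree_eq_natDegree hg.ne_zero]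
      exact_mod_cast (show g.natDegree ≤ n by omega)
    refine ⟨hPm.add_of_left hblt, ?_, ?_⟩
    · have h1 := Polynomial.degree_add_eq_left_of_degree_lt hblt
      rw [Polynomial.natDegree_eq_of_degree_eq h1, hPd]
    · have h2 : X ^ (n / 2) * g * b₁ + b₂ = b₂ + g * (X ^ (n / 2) * b₁) := by ring
      rw [h2]
      exact hb₂c.add_mul_left_left _
  refine ⟨part1, ?_⟩
  intro f hfm hfd hfcop
  have key : ∀ y : Polynomial Fq, y.Monic → y.natDegree = n →
      (Requiv s g f y ↔ (g ∣ (f - y) ∧ (f - y).degree < ((n - s : ℕ) : WithBot ℕ))) := by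
    intro y hy hyd
    unfold Requiv
    rw [hfd, hyd]
    exact and_congr Iff.rfl (nrm_lt_iff f y n s hsn hfd.le hyd.le)
  set P : Polynomial Fq := X ^ (n / 2) * g with hPdef
  have hPm : P.Monic := (monic_X_pow _).mul hg
  have hPd : P.natDegree = n / 2 + g.natDegree := by
    rw [hPdef, Polynomial.natDegree_mul (monic_X_pow (R := Fq) _).ne_zero hg.ne_zero,
      Polynomial.natDegree_X_pow]
  have hns : n / 2 + g.natDegree = n - s := by omega
  set b₁ := f /ₘ P with hb₁def
  set r₁ := f %ₘ P with hr₁def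
  set b₂ := f %ₘ g with hb₂def
  set q₂ := f /ₘ g with hq₂def
  have e₁ : r₁ + P * b₁ = f := Polynomial.modByMonic_add_div f P
  have e₂ : b₂ + g * q₂ = f := Polynomial.modByMonic_add_div f g
  have hb₁d : b₁.natDegree = s := by
    rw [hb₁def, Polynomial.natDegree_divByMonic f hPm, hfd, hPd]
    omega
  have hPdegle : P.degree ≤ f.degree := by
    rw [Polynomial.degree_eq_natDegree hPm.ne_zero, Polynomial.degree_eq_natDegree hfm.ne_zero,
      hPd, hfd]
    exact_mod_cast (show n / 2 + g.natDegree ≤ n by omega)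
  have hb₁m : b₁.Monic := by
    unfold Polynomial.Monic
    rw [hb₁def, Polynomial.leadingCoeff_divByMonic_of_monic hPm hPdegle]
    exact hfm
  have hb₂d : b₂.degree < g.degree := Polynomial.degree_modByMonic_lt f hg
  have hb₂c : IsCoprime b₂ g :=
    IsCoprime.of_add_mul_left_left (show IsCoprime (b₂ + g * q₂) g by rw [e₂]; exact hfcop)
  set b := P * b₁ + b₂ with hbdef
  have hbS : b ∈ S := by
    rw [hS]
    exact ⟨b₁, b₂, hb₁m, hb₁d, hb₂d, hb₂c, by rw [hbdef, hPdef]⟩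
  obtain ⟨hbm, hbd, hbc⟩ := part1 b hbS
  have hgd_le : (g.degree : WithBot ℕ) ≤ ((n - s : ℕ) : WithBot ℕ) := by
    rw [Polynomial.degree_eq_natDegree hg.ne_zero]
    exact_mod_cast (show g.natDegree ≤ n - s by omega)
  have hreq : Requiv s g f b := by
    rw [key b hbm hbd]
    constructor
    · refine ⟨q₂ - X ^ (n / 2) * b₁, ?_⟩
      rw [hbdef, hPdef, ← e₂]
      ring
    · have hfb : f - b = r₁ - b₂ := by rw [hbdef, ← e₁]; ring
      rw [hfb]
      have h1 : r₁.degree < ((n - s : ℕ) : WithBot ℕ) := by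
        have h := Polynomial.degree_modByMonic_lt f hPm
        rwa [Polynomial.degree_eq_natDegree hPm.ne_zero, hPd, hns] at h
      have h2 : b₂.degree < ((n - s : ℕ) : WithBot ℕ) := lt_of_lt_of_le hb₂d hgd_le
      exact lt_of_le_of_lt (Polynomial.degree_sub_le _ _) (max_lt h1 h2)
  refine ⟨b, ⟨hbS, hreq⟩, ?_⟩
  rintro y ⟨hyS, hyreq⟩
  obtain ⟨hym, hyd, hyc⟩ := part1 y hyS
  have hySm := hyS
  rw [hS] at hySm
  obtain ⟨c₁, c₂, hc₁m, hc₁d, hc₂d, hc₂c, hy⟩ := hySm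
  obtain ⟨hgdvd_y, hdeg_y⟩ := (key y hym hyd).mp hyreq
  obtain ⟨hgdvd_b, hdeg_b⟩ := (key b hbm hbd).mp hreq
  have hyb : y - b = (f - b) - (f - y) := by ring
  have hby_deg : (y - b).degree < ((n - s : ℕ) : WithBot ℕ) := by
    rw [hyb]
    exact lt_of_le_of_lt (Polynomial.degree_sub_le _ _) (max_lt hdeg_b hdeg_y)
  have hby_dvd : g ∣ (y - b) := by
    rw [hyb]
    exact dvd_sub hgdvd_b hgdvd_y
  by_cases hcc : c₁ = b₁
  · have h5 : y - b = c₂ - b₂ := by rw [hy, hbdef, hPdef, hcc]; ring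
    have hzero : y - b = 0 := by
      refine Polynomial.eq_zero_of_dvd_of_degree_lt hby_dvd ?_
      rw [h5]
      exact lt_of_le_of_lt (Polynomial.degree_sub_le _ _) (max_lt hc₂d hb₂d)
    exact sub_eq_zero.mp hzero
  · exfalso
    have hne : c₁ - b₁ ≠ 0 := sub_ne_zero.mpr hcc
    have hPdeg' : P.degree = ((n - s : ℕ) : WithBot ℕ) := by
      rw [Polynomial.degree_eq_natDegree hPm.ne_zero, hPd, hns]
    have hdeg1 : ((n - s : ℕ) : WithBot ℕ) ≤ (P * (c₁ - b₁)).degree := by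
      rw [Polynomial.degree_mul, hPdeg']
      exact le_add_of_nonneg_right (Polynomial.zero_le_degree_iff.mpr hne)
    have hdeg2 : (c₂ - b₂).degree < (P * (c₁ - b₁)).degree := by
      refine lt_of_lt_of_le ?_ hdeg1
      exact lt_of_le_of_lt (Polynomial.degree_sub_le _ _)
        (max_lt (lt_of_lt_of_le hc₂d hgd_le) (lt_of_lt_of_le hb₂d hgd_le))
    have h6 : y - b = P * (c₁ - b₁) + (c₂ - b₂) := by rw [hy, hbdef, hPdef]; ring
    have h7 : (y - b).degree = (P * (c₁ - b₁)).degree := by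
      rw [h6]
      exact Polynomial.degree_add_eq_left_of_degree_lt hdeg2
    rw [h7] at hby_deg
    exact absurd hby_deg (not_lt.mpr hdeg1)
end

section
/- Let s ≥ 0 be an integer and g ∈ F_q[t]. A monic polynomial f is invertible in the quotient monoid F_q[t]^×/R_{s,g} if and only if gcd(f, g) = 1. -/
/-!
Common setup: `F_q((1/t))` is realized as `LaurentSeries Fq` (formal Laurent series in `X`)
under the identification `X = 1/t`; thus the coefficient of `t^i` is the coefficient of
`X^(-i)`, and `𝕋` consists of series supported on positive powers of `X`.
-/

open Polynomial
open scoped Classical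

lemma toL_monomial' {Fq : Type} [Field Fq] (i : ℕ) (a : Fq) :
    toL (Polynomial.monomial i a) = HahnSeries.single (-(i:ℤ)) a := by
  rw [toL, Polynomial.aeval_monomial, HahnSeries.algebraMap_apply',
    PowerSeries.algebraMap_apply, Algebra.algebraMap_self, RingHom.id_apply,
    HahnSeries.ofPowerSeries_C, HahnSeries.C_apply, tElem, HahnSeries.single_pow, one_pow,
    HahnSeries.single_mul_single, zero_add, mul_one]
  norm_num

lemma toL_coeff_neg' {Fq : Type} [Field Fq] (e : Polynomial Fq) (k : ℕ) :
    (toL e).coeff (-(k:ℤ)) = e.coeff k := by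
  induction e using Polynomial.induction_on' with
  | add p q hp hq =>
      simp only [toL, map_add, HahnSeries.coeff_add, Polynomial.coeff_add] at *
      rw [hp, hq]
  | monomial i a =>
    rw [toL_monomial', HahnSeries.coeff_single, Polynomial.coeff_monomial]
    rcases eq_or_ne i k with h | h
    · simp [h]
    · rw [if_neg (by omega), if_neg (by omega)]

lemma nrm_lt_key' {Fq : Type} [Field Fq] [Fintype Fq] (s : ℕ) (F : Polynomial Fq)
    (hF : F.Monic) (hs : s < F.natDegree)
    (hc : ∀ k : ℕ, k < F.natDegree → F.natDegree ≤ k + s → F.coeff k = 0) :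
    nrm (toL F * HahnSeries.single ((F.natDegree : ℤ)) 1 - 1)
      < (Fintype.card Fq : ℝ) ^ (-(s:ℤ)) := by
  set m := F.natDegree with hm
  set D : LaurentSeries Fq := toL F * HahnSeries.single ((m : ℤ)) 1 - 1 with hD
  have hq1 : (1:ℝ) < (Fintype.card Fq : ℝ) := by exact_mod_cast Fintype.one_lt_card
  have hcoeff : ∀ n : ℤ, n ≤ (s:ℤ) → D.coeff n = 0 := by
    intro n hn
    have hnm : n < (m:ℤ) := lt_of_le_of_lt hn (by exact_mod_cast hs)
    have h1 : (toL F * HahnSeries.single ((m:ℤ)) 1).coeff n = (toL F).coeff (n - (m:ℤ)) := by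
      have h := HahnSeries.coeff_mul_single_add (r := (1:Fq)) (x := toL F)
        (a := n - (m:ℤ)) (b := (m:ℤ))
      rw [sub_add_cancel] at h
      rw [h, mul_one]
    set k : ℕ := ((m:ℤ) - n).toNat with hk
    have hk' : n - (m:ℤ) = -(k:ℤ) := by omega
    rw [hD, HahnSeries.coeff_sub, h1, hk', toL_coeff_neg' F k, HahnSeries.coeff_one]
    rcases lt_trichotomy n 0 with h | h | h
    · rw [if_neg (by omega), Polynomial.coeff_eq_zero_of_natDegree_lt (by omega), sub_zero]
    · have hkm : k = m := by omega
      rw [if_pos h, hkm, hm, hF.coeff_natDegree, sub_self]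
    · rw [if_neg (by omega), hc k (by omega) (by omega), sub_zero]
  by_cases h0 : D = 0
  · rw [nrm, if_pos h0]
    positivity
  · rw [nrm, if_neg h0]
    have horder : (s:ℤ) < D.order := by
      by_contra hle
      push_neg at hle
      exact h0 (HahnSeries.coeff_order_eq_zero.mp (hcoeff _ hle))
    exact zpow_lt_zpow_right₀ hq1 (by omega)


/-- A monic polynomial `f` is invertible in the quotient monoid
`F_q[t]^×/R_{s,g}` (i.e. there is a monic `h` with `f·h ≡ 1 mod R_{s,g}`) if and only if
`gcd(f, g) = 1`. -/
theorem invertible_mod_Requiv_iff_coprime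
    (Fq : Type) [Field Fq] [Fintype Fq] (s : ℕ) (g : Polynomial Fq)
    (f : Polynomial Fq) (hf : f.Monic) :
    (∃ h : Polynomial Fq, h.Monic ∧ Requiv s g (f * h) 1) ↔ IsCoprime f g := by
  have honeL : toL (1 : Polynomial Fq) *
      HahnSeries.single (((1 : Polynomial Fq).natDegree : ℤ)) 1 = 1 := by
    rw [toL, map_one, Polynomial.natDegree_one, Nat.cast_zero, HahnSeries.single_zero_one, mul_one]
  constructor
  · rintro ⟨h, hh, hdvd, -⟩
    obtain ⟨k, hk⟩ := hdvd
    exact ⟨h, -k, by linear_combination hk⟩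
  · intro hco
    by_cases hg : g = 0
    · subst hg
      have hfu : IsUnit f := isCoprime_zero_right.mp hco
      have hf1 : f = 1 := hf.eq_one_of_isUnit hfu
      refine ⟨1, monic_one, ⟨0, by simp [hf1]⟩, ?_⟩
      rw [hf1, mul_one, honeL, sub_self, nrm, if_pos rfl]
      positivity
    · obtain ⟨u, v, huv⟩ := hco
      set G : Polynomial Fq := g * C (g.leadingCoeff)⁻¹ with hG
      have hGm : G.Monic := monic_mul_leadingCoeff_inv hg
      have hfG : (f * G).Monic := hf.mul hGm
      set Dn : ℕ := f.natDegree + G.natDegree with hDn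
      have hfGdeg : (f * G).natDegree = Dn := hf.natDegree_mul hGm
      set m : ℕ := u.natDegree + f.natDegree + Dn + s + 1 with hmdef
      set q0 : Polynomial Fq := (X ^ m : Polynomial Fq) /ₘ (f * G) with hq0
      set r : Polynomial Fq := (X ^ m : Polynomial Fq) %ₘ (f * G) with hr
      have hXm : r + (f * G) * q0 = X ^ m := modByMonic_add_div _ _
      have hrdeg : r.degree < (Dn : WithBot ℕ) := by
        have := degree_modByMonic_lt (X ^ m : Polynomial Fq) hfG
        rwa [degree_eq_natDegree hfG.ne_zero, hfGdeg] at this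
      have hq0m : q0.Monic := by
        have hle : (f * G).degree ≤ (X ^ m : Polynomial Fq).degree := by
          rw [degree_eq_natDegree hfG.ne_zero, hfGdeg, degree_X_pow]
          exact_mod_cast by omega
        have := leadingCoeff_divByMonic_of_monic hfG hle
        rw [Monic, this, leadingCoeff_X_pow]
      have hq0deg : q0.natDegree = m - Dn := by
        rw [hq0, natDegree_divByMonic _ hfG, natDegree_X_pow, hfGdeg]
      have hGq0deg : (G * q0).natDegree = m - f.natDegree := by
        rw [hGm.natDegree_mul hq0m, hq0deg]; omega
      set h : Polynomial Fq := u + G * q0 with hh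
      have hGq0m : (G * q0).Monic := hGm.mul hq0m
      have hhm : h.Monic := by
        refine hGq0m.add_of_right (degree_lt_degree ?_)
        rw [hGq0deg]; omega
      -- F = f * h = X^m + e
      set e : Polynomial Fq := f * u - r with he
      have hFe : f * h = X ^ m + e := by
        rw [hh, he]
        linear_combination hXm
      have hedeg : e.degree < ((u.natDegree + f.natDegree + Dn + 1 : ℕ) : WithBot ℕ) := by
        apply lt_of_le_of_lt (degree_sub_le _ _)
        rw [max_lt_iff]
        constructor
        · apply lt_of_le_of_lt (degree_mul_le _ _)
          apply lt_of_le_of_lt (add_le_add degree_le_natDegree degree_le_natDegree)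
          have : f.natDegree + u.natDegree < u.natDegree + f.natDegree + Dn + 1 := by omega
          exact_mod_cast this
        · exact lt_of_lt_of_le hrdeg (by exact_mod_cast by omega)
      have hedeg' : e.degree < ((m - s : ℕ) : WithBot ℕ) :=
        lt_of_lt_of_le hedeg (by exact_mod_cast by omega)
      have hedegm : e.degree < (X ^ m : Polynomial Fq).degree := by
        rw [degree_X_pow]
        exact lt_of_lt_of_le hedeg' (by exact_mod_cast by omega)
      have hFdeg : (f * h).natDegree = m := by
        rw [hFe]
        rw [natDegree_add_eq_left_of_degree_lt hedegm, natDegree_X_pow]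
      refine ⟨h, hhm, ?_, ?_⟩
      · refine ⟨f * C (g.leadingCoeff)⁻¹ * q0 - v, ?_⟩
        rw [hh, hG]
        linear_combination huv
      · rw [honeL]
        apply nrm_lt_key' s (f * h) (hf.mul hhm)
        · rw [hFdeg]; omega
        · intro k hk1 hk2
          rw [hFdeg] at hk1 hk2
          rw [hFe, coeff_add, coeff_X_pow, if_neg (by omega), zero_add]
          apply coeff_eq_zero_of_degree_lt
          refine lt_of_lt_of_le hedeg' ?_
          have : m - s ≤ k := by omega
          exact_mod_cast this
end
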